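/- For every nonzero continuously differentiable function v on [0,L] with v(L) = 0, one has ∫₀^L v'(x)² dx ≥ (π²/(4L²))·∫₀^L v(x)² dx, with equality for v(x) = cos(πx/(2L)). -/

import Mathlib

open Real Set intervalIntegral MeasureTheory Filter Topology

/-- Key inequality for truncated intervals. -/
lemma poincare_key (L : ℝ) (hL : 0 < L) (v : ℝ → ℝ) (hv : ContDiff ℝ 1 v)
    (t : ℝ) (ht : t ∈ Set.Ico 0 L) :
    let k := Real.pi / (2 * L)
    k ^ 2 * ∫ x in (0:ℝ)..t, (v x)^2 ≤
      (∫ x in (0:ℝ)..t, (deriv v x)^2) + k * (v t)^2 * Real.tan (k * t) := by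
  intro k
  have hk : 0 < k := by positivity
  have hkL : k * L = Real.pi / 2 := by simp only [k]; field_simp
  obtain ⟨ht0, htL⟩ := ht
  have hvc : Continuous v := hv.continuous
  have hv' : Continuous (deriv v) := hv.continuous_deriv le_rfl
  have hdv : ∀ x, HasDerivAt v (deriv v x) x := fun x =>
    ((hv.differentiable one_ne_zero) x).hasDerivAt
  -- cos (k x) > 0 on [0, t]
  have hcos : ∀ x ∈ Set.uIcc (0:ℝ) t, 0 < Real.cos (k * x) := by
    intro x hx
    rw [Set.uIcc_of_le ht0] at hx
    apply Real.cos_pos_of_mem_Ioo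
    constructor
    · nlinarith [hx.1, Real.pi_pos]
    · have : k * x ≤ k * t := by nlinarith [hx.2]
      have : k * t < k * L := by nlinarith
      rw [hkL] at this
      nlinarith [hx.2]
  -- derivative of the boundary function G
  set G : ℝ → ℝ := fun x => k * v x ^ 2 * Real.tan (k * x) with hGdef
  set G' : ℝ → ℝ := fun x =>
    k * (2 * v x * deriv v x * Real.tan (k * x) + v x ^ 2 * (k / Real.cos (k * x) ^ 2))
    with hG'def
  have hGderiv : ∀ x ∈ Set.uIcc (0:ℝ) t, HasDerivAt G (G' x) x := by
    intro x hx
    have hc := (hcos x hx).ne'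
    have htan : HasDerivAt (fun y => Real.tan (k * y)) (1 / Real.cos (k * x) ^ 2 * k) x := by
      have h1 : HasDerivAt (fun y : ℝ => k * y) k x := by
        simpa using (hasDerivAt_id x).const_mul k
      exact (Real.hasDerivAt_tan hc).comp x h1
    have hsq : HasDerivAt (fun y => v y ^ 2) (2 * v x * deriv v x) x := by
      simpa [mul_comm, mul_assoc] using ((hdv x).fun_pow 2)
    have h := ((hsq.fun_mul htan).const_mul k)
    have hfun : G = fun y => k * (v y ^ 2 * Real.tan (k * y)) :=
      funext fun y => mul_assoc _ _ _
    rw [hfun]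
    convert h using 1
    · rfl
    · rfl
    simp only [hG'def]
    ring
  -- continuity of the pieces on [0, t]
  have hcostan : ContinuousOn (fun x => Real.tan (k * x)) (Set.uIcc (0:ℝ) t) := by
    intro x hx
    exact ((Real.continuousAt_tan.2 (hcos x hx).ne').comp
      (continuous_const.mul continuous_id).continuousAt).continuousWithinAt
  have hcostan2 : ContinuousOn (fun x => k / Real.cos (k * x) ^ 2) (Set.uIcc (0:ℝ) t) := by
    apply ContinuousOn.div continuousOn_const
    · exact ((Real.continuous_cos.comp (continuous_const.mul continuous_id)).pow 2).continuousOn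
    · intro x hx
      exact pow_ne_zero _ (hcos x hx).ne'
  have hG'cont : ContinuousOn G' (Set.uIcc (0:ℝ) t) := by
    apply ContinuousOn.mul continuousOn_const
    exact (((continuousOn_const.mul hvc.continuousOn).mul hv'.continuousOn).mul hcostan).add
      ((hvc.continuousOn.pow 2).mul hcostan2)
  have hG'int : IntervalIntegrable G' volume 0 t := hG'cont.intervalIntegrable
  have hFTC : ∫ x in (0:ℝ)..t, G' x = G t - G 0 :=
    intervalIntegral.integral_eq_sub_of_hasDerivAt hGderiv hG'int
  have hG0 : G 0 = 0 := by simp [hGdef]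
  -- pointwise identity
  have hid : ∀ x ∈ Set.uIcc (0:ℝ) t,
      (deriv v x)^2 - k^2 * (v x)^2
        = (deriv v x + k * v x * Real.tan (k * x))^2 - G' x := by
    intro x hx
    have hc := (hcos x hx).ne'
    have h1 : Real.tan (k * x) ^ 2 + 1 = 1 / Real.cos (k * x) ^ 2 := by
      have h2 := Real.inv_one_add_tan_sq hc
      field_simp at h2 ⊢
      linarith
    have h3 : k / Real.cos (k * x) ^ 2 = k * (Real.tan (k * x) ^ 2 + 1) := by
      rw [h1]; ring
    simp only [hG'def, h3]
    ring
  -- integrabilities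
  have hW : ContinuousOn (fun x => (deriv v x + k * v x * Real.tan (k * x))^2)
      (Set.uIcc (0:ℝ) t) := by
    apply ContinuousOn.pow
    exact hv'.continuousOn.add ((continuousOn_const.mul hvc.continuousOn).mul hcostan)
  have hint1 : IntervalIntegrable (fun x => (deriv v x)^2) volume 0 t :=
    ((hv'.pow 2)).intervalIntegrable 0 t
  have hint2 : IntervalIntegrable (fun x => k^2 * (v x)^2) volume 0 t :=
    (continuous_const.mul (hvc.pow 2)).intervalIntegrable 0 t
  have hWint : IntervalIntegrable (fun x => (deriv v x + k * v x * Real.tan (k * x))^2)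
      volume 0 t := hW.intervalIntegrable
  -- put it together
  have hsplit : (∫ x in (0:ℝ)..t, (deriv v x)^2) - (∫ x in (0:ℝ)..t, k^2 * (v x)^2)
      = (∫ x in (0:ℝ)..t, (deriv v x + k * v x * Real.tan (k * x))^2)
        - ∫ x in (0:ℝ)..t, G' x := by
    rw [← intervalIntegral.integral_sub hint1 hint2,
        ← intervalIntegral.integral_sub hWint hG'int]
    exact intervalIntegral.integral_congr hid
  have hnn : 0 ≤ ∫ x in (0:ℝ)..t, (deriv v x + k * v x * Real.tan (k * x))^2 :=
    intervalIntegral.integral_nonneg ht0 (fun x _ => sq_nonneg _)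
  have hconst : (∫ x in (0:ℝ)..t, k^2 * (v x)^2) = k^2 * ∫ x in (0:ℝ)..t, (v x)^2 :=
    intervalIntegral.integral_const_mul _ _
  rw [hFTC, hG0, sub_zero] at hsplit
  rw [hconst] at hsplit
  simp only [hGdef] at hsplit
  linarith

lemma cos_lower (L : ℝ) (hL : 0 < L) (t : ℝ) (ht : t ∈ Set.Icc 0 L) :
    (L - t) / L ≤ Real.cos (Real.pi / (2 * L) * t) := by
  set k := Real.pi / (2 * L) with hk
  have hkpos : 0 < k := by positivity
  have hkL : k * L = Real.pi / 2 := by rw [hk]; field_simp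
  have h1 : Real.cos (k * t) = Real.sin (k * (L - t)) := by
    have : k * (L - t) = Real.pi / 2 - k * t := by rw [mul_sub, hkL]
    rw [this, Real.sin_pi_div_two_sub]
  have h2 : 2 / Real.pi * (k * (L - t)) ≤ Real.sin (k * (L - t)) := by
    apply Real.mul_le_sin
    · nlinarith [ht.2]
    · nlinarith [ht.1, hkL]
  have h3 : 2 / Real.pi * k = 1 / L := by
    rw [hk]; field_simp
  rw [h1]
  calc (L - t) / L = 2 / Real.pi * k * (L - t) := by rw [h3]; ring
    _ = 2 / Real.pi * (k * (L - t)) := by ring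
    _ ≤ _ := h2

/-- Poincaré-type inequality for C¹ functions vanishing at x = L:
∫₀^L v'² ≥ (π²/(4L²)) ∫₀^L v², with equality for v(x) = cos(πx/(2L)). -/
theorem poincare_cantilever
    (L : ℝ) (hL : 0 < L) :
    (∀ v : ℝ → ℝ, ContDiff ℝ 1 v → v L = 0 → (∃ x ∈ Set.Icc (0:ℝ) L, v x ≠ 0) →
      Real.pi^2 / (4 * L^2) * ∫ x in (0:ℝ)..L, (v x)^2
        ≤ ∫ x in (0:ℝ)..L, (deriv v x)^2) ∧
    (∫ x in (0:ℝ)..L, (deriv (fun x => Real.cos (Real.pi * x / (2 * L))) x)^2)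
      = Real.pi^2 / (4 * L^2) * ∫ x in (0:ℝ)..L, (Real.cos (Real.pi * x / (2 * L)))^2 := by
  have hpi := Real.pi_pos
  set k := Real.pi / (2 * L) with hkdef
  have hk : 0 < k := by positivity
  have hkL : k * L = Real.pi / 2 := by rw [hkdef]; field_simp
  have hk2 : k ^ 2 = Real.pi ^ 2 / (4 * L ^ 2) := by
    rw [hkdef]; field_simp; ring
  constructor
  · intro v hv hvL _
    have hvc : Continuous v := hv.continuous
    have hv' : Continuous (deriv v) := hv.continuous_deriv le_rfl
    set P : ℝ → ℝ := fun t => ∫ x in (0:ℝ)..t, (deriv v x)^2 with hP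
    set Q : ℝ → ℝ := fun t => ∫ x in (0:ℝ)..t, (v x)^2 with hQ
    set G : ℝ → ℝ := fun t => k * (v t)^2 * Real.tan (k * t) with hG
    -- continuity of primitives
    have hPcont : ContinuousOn P (Set.uIcc 0 L) :=
      intervalIntegral.continuousOn_primitive_interval
        (((hv'.pow 2)).continuousOn.integrableOn_compact isCompact_uIcc)
    have hQcont : ContinuousOn Q (Set.uIcc 0 L) :=
      intervalIntegral.continuousOn_primitive_interval
        (((hvc.pow 2)).continuousOn.integrableOn_compact isCompact_uIcc)
    set l : Filter ℝ := nhdsWithin L (Set.Ico 0 L) with hl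
    have hmem : L ∈ Set.uIcc 0 L := by
      rw [Set.uIcc_of_le hL.le]; exact Set.right_mem_Icc.2 hL.le
    have hlle : l ≤ nhdsWithin L (Set.uIcc 0 L) := by
      rw [Set.uIcc_of_le hL.le]
      exact nhdsWithin_mono L Set.Ico_subset_Icc_self
    have hnebot : l.NeBot := by
      apply mem_closure_iff_nhdsWithin_neBot.mp
      rw [closure_Ico hL.ne]
      exact Set.right_mem_Icc.2 hL.le
    have hPl : Filter.Tendsto P l (nhds (P L)) := ((hPcont L hmem).tendsto).mono_left hlle
    have hQl : Filter.Tendsto Q l (nhds (Q L)) := ((hQcont L hmem).tendsto).mono_left hlle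
    -- Lipschitz bound for v near L
    obtain ⟨C, hC⟩ := (isCompact_Icc (a := (0:ℝ)) (b := L)).exists_bound_of_continuousOn
      hv'.continuousOn
    have hlip : ∀ t ∈ Set.Icc (0:ℝ) L, |v t| ≤ C * (L - t) := by
      intro t ht
      have := (convex_Icc (0:ℝ) L).norm_image_sub_le_of_norm_deriv_le
        (fun x _ => (hv.differentiable one_ne_zero) x) hC
        (Set.right_mem_Icc.2 hL.le) ht
      rw [hvL] at this
      simpa [Real.norm_eq_abs, abs_of_nonpos (by linarith [ht.2] : t - L ≤ 0)] using this
    have hCnn : 0 ≤ C := le_trans (norm_nonneg _) (hC 0 (Set.left_mem_Icc.2 hL.le))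
    -- boundary term tends to 0
    have hGl : Filter.Tendsto G l (nhds 0) := by
      have hev : ∀ᶠ t in l, t ∈ Set.Ico 0 L := self_mem_nhdsWithin
      apply squeeze_zero' (f := G) (g := fun t => k * C^2 * L * (L - t))
      · filter_upwards [hev] with t ht
        have h1 : 0 < Real.cos (k * t) := by
          have := cos_lower L hL t ⟨ht.1, ht.2.le⟩
          have h2 : 0 < (L - t) / L := by
            apply div_pos <;> linarith [ht.2]
          rw [← hkdef] at this
          linarith
        have h2 : 0 ≤ Real.sin (k * t) := by
          apply Real.sin_nonneg_of_nonneg_of_le_pi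
          · exact mul_nonneg hk.le ht.1
          · nlinarith [ht.2]
        have h3 : 0 ≤ Real.tan (k * t) := by
          rw [Real.tan_eq_sin_div_cos]; positivity
        rw [hG]; positivity
      · filter_upwards [hev] with t ht
        have hLt : 0 < L - t := by linarith [ht.2]
        have hcl := cos_lower L hL t ⟨ht.1, ht.2.le⟩
        rw [← hkdef] at hcl
        have h1 : 0 < Real.cos (k * t) := lt_of_lt_of_le (div_pos hLt hL) hcl
        have htan : Real.tan (k * t) ≤ L / (L - t) := by
          rw [Real.tan_eq_sin_div_cos]
          have h2 : Real.sin (k * t) / Real.cos (k * t) ≤ 1 / Real.cos (k * t) := by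
            gcongr
            exact Real.sin_le_one _
          have h3 : 1 / Real.cos (k * t) ≤ 1 / ((L - t) / L) :=
            one_div_le_one_div_of_le (div_pos hLt hL) hcl
          have h4 : 1 / ((L - t) / L) = L / (L - t) := by field_simp
          linarith
        have htan0 : 0 ≤ Real.tan (k * t) := by
          rw [Real.tan_eq_sin_div_cos]
          have h2 : 0 ≤ Real.sin (k * t) := by
            apply Real.sin_nonneg_of_nonneg_of_le_pi
            · exact mul_nonneg hk.le ht.1
            · nlinarith [ht.2]
          positivity
        have hv2 : (v t)^2 ≤ C^2 * (L - t)^2 := by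
          have := hlip t ⟨ht.1, ht.2.le⟩
          nlinarith [abs_nonneg (v t), sq_abs (v t)]
        calc G t = k * (v t)^2 * Real.tan (k * t) := rfl
          _ ≤ k * (C^2 * (L - t)^2) * (L / (L - t)) := by
              apply mul_le_mul (by nlinarith) htan htan0 (by positivity)
          _ = k * C^2 * L * (L - t) := by field_simp
      · have hcont : Filter.Tendsto (fun t => k * C^2 * L * (L - t)) (nhds L)
            (nhds (k * C^2 * L * (L - L))) := by
          apply Filter.Tendsto.const_mul
          exact tendsto_const_nhds.sub tendsto_id
        rw [sub_self, mul_zero] at hcont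
        exact hcont.mono_left nhdsWithin_le_nhds
    -- key inequality eventually
    have hkey : ∀ᶠ t in l, k^2 * Q t ≤ P t + G t := by
      filter_upwards [self_mem_nhdsWithin] with t ht
      exact poincare_key L hL v hv t ht
    -- pass to the limit
    have hT : Filter.Tendsto (fun t => P t + G t - k^2 * Q t) l
        (nhds (P L + 0 - k^2 * Q L)) := (hPl.add hGl).sub (hQl.const_mul _)
    have h0 : 0 ≤ P L + 0 - k^2 * Q L := by
      apply ge_of_tendsto hT
      filter_upwards [hkey] with t ht
      linarith
    rw [← hk2]
    simp only [hP, hQ] at h0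
    linarith
  · -- equality case
    have hder : deriv (fun x => Real.cos (Real.pi * x / (2 * L)))
        = fun x => -(Real.sin (k * x)) * k := by
      funext x
      have h1 : HasDerivAt (fun x : ℝ => Real.pi * x / (2 * L)) k x := by
        have := ((hasDerivAt_id x).const_mul Real.pi).div_const (2 * L)
        simpa [hkdef, mul_comm] using this
      have h2 : HasDerivAt (fun x => Real.cos (Real.pi * x / (2 * L)))
          (-(Real.sin (Real.pi * x / (2 * L))) * k) x :=
        (Real.hasDerivAt_cos _).comp x h1
      rw [h2.deriv]
      congr 2
      rw [hkdef]; ring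
    have harg : ∀ x : ℝ, Real.pi * x / (2 * L) = k * x := by
      intro x; rw [hkdef]; ring
    have hsin : (∫ x in (0:ℝ)..L, Real.sin (k * x) ^ 2) = k⁻¹ * (Real.pi / 4) := by
      rw [intervalIntegral.integral_comp_mul_left (fun y => Real.sin y ^ 2) hk.ne']
      rw [mul_zero, hkL, integral_sin_sq]
      simp only [Real.sin_zero, Real.cos_zero, Real.sin_pi_div_two,
        Real.cos_pi_div_two, smul_eq_mul]
      ring
    have hcos : (∫ x in (0:ℝ)..L, Real.cos (k * x) ^ 2) = k⁻¹ * (Real.pi / 4) := by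
      rw [intervalIntegral.integral_comp_mul_left (fun y => Real.cos y ^ 2) hk.ne']
      rw [mul_zero, hkL, integral_cos_sq]
      simp only [Real.sin_zero, Real.cos_zero, Real.sin_pi_div_two,
        Real.cos_pi_div_two, smul_eq_mul]
      ring
    rw [hder]
    have e1 : (∫ x in (0:ℝ)..L, (-(Real.sin (k * x)) * k)^2)
        = k^2 * ∫ x in (0:ℝ)..L, Real.sin (k * x) ^ 2 := by
      rw [← intervalIntegral.integral_const_mul]
      apply intervalIntegral.integral_congr
      intro x _; ring
    have e2 : (∫ x in (0:ℝ)..L, Real.cos (Real.pi * x / (2 * L)) ^ 2)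
        = ∫ x in (0:ℝ)..L, Real.cos (k * x) ^ 2 := by
      apply intervalIntegral.integral_congr
      intro x _
      dsimp only
      rw [harg]
    rw [e1, e2, hsin, hcos, ← hk2]
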